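/- arXiv:1512.04041 — 2 statements merged into one kernel-verified Lean document; each statement's English description precedes it below -/
import Mathlib

section
/- Let α be a quadratic element of the algebraic closure of F_q(T) (i.e., algebraic of degree 2 over F_q(T)) and let α' be its Galois conjugate. If α ≠ α', then H(α)^{−1} ≤ |α − α'| ≤ H(α). -/
open Polynomial Filter
open scoped ENNReal

noncomputable section

namespace Ooto

variable (Fq : Type) [Field Fq] [Fintype Fq]

/-- `F_q((T⁻¹))`, realized as formal Laurent series in the variable `X = T⁻¹`. -/
abbrev K := LaurentSeries Fq

/-- The element `T = X⁻¹` of `F_q((T⁻¹))`. -/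
def TT : K Fq := HahnSeries.single (-1 : ℤ) (1 : Fq)

/-- The natural embedding of `F_q[T]` into `F_q((T⁻¹))`, sending `T` to `T`. -/
def polyToK : Polynomial Fq →+* K Fq := Polynomial.eval₂RingHom HahnSeries.C (TT Fq)

open Classical in
/-- The absolute value on `F_q((T⁻¹))`: `|0| = 0` and `|ξ| = q^{-N}` where `N` is the order
of `ξ` as a series in `T⁻¹`. -/
def kabs (f : K Fq) : ℝ := if f = 0 then 0 else (Fintype.card Fq : ℝ) ^ (-f.order)

/-- A fixed algebraic closure of `F_q((T⁻¹))`. -/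
abbrev L := AlgebraicClosure (K Fq)

def toL : K Fq →+* L Fq := algebraMap (K Fq) (L Fq)

def φ : Polynomial Fq →+* L Fq := (toL Fq).comp (polyToK Fq)

/-- Evaluation of `P ∈ (F_q[T])[X]` at `ξ ∈ F_q((T⁻¹))`. -/
def evalK (P : Polynomial (Polynomial Fq)) (ξ : K Fq) : K Fq :=
  Polynomial.eval₂ (polyToK Fq) ξ P

/-- Evaluation of `P ∈ (F_q[T])[X]` at a point of the algebraic closure. -/
def evalL (P : Polynomial (Polynomial Fq)) (α : L Fq) : L Fq :=
  Polynomial.eval₂ (φ Fq) α P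

/-- Height of a polynomial over `F_q[T]`: the maximum of the absolute values of its
coefficients. -/
def Hpoly (P : Polynomial (Polynomial Fq)) : ℝ := ⨆ i : ℕ, kabs Fq (polyToK Fq (P.coeff i))

/-- `P` is the minimal polynomial of `α`: a non-constant irreducible primitive polynomial in
`(F_q[T])[X]` whose leading coefficient is monic in `T`, vanishing at `α`. -/
def IsMinPolyOf (P : Polynomial (Polynomial Fq)) (α : L Fq) : Prop :=
  0 < P.natDegree ∧ Irreducible P ∧ P.IsPrimitive ∧ (P.leadingCoeff).Monic ∧ evalL Fq P α = 0

/-- `α` is algebraic over `F_q(T)`. -/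
def IsAlgElem (α : L Fq) : Prop := ∃ P, IsMinPolyOf Fq P α

open Classical in
/-- The minimal polynomial of an algebraic element (junk value `0` otherwise). -/
def minPolyPrim (α : L Fq) : Polynomial (Polynomial Fq) :=
  if h : IsAlgElem Fq α then h.choose else 0

/-- Degree of an algebraic element. -/
def degAlg (α : L Fq) : ℕ := (minPolyPrim Fq α).natDegree

/-- Height of an algebraic element. -/
def heightAlg (α : L Fq) : ℝ := Hpoly Fq (minPolyPrim Fq α)

/-- Inseparable degree of a polynomial `P ∈ (F_q[T])[X]`: the largest power `f = p^j` of the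
characteristic such that `P(X) = R(X^f)` for some `R`. -/
def insepDeg (P : Polynomial (Polynomial Fq)) : ℕ :=
  (ringChar Fq) ^ sSup {j : ℕ | ∃ R : Polynomial (Polynomial Fq),
    P = R.comp (Polynomial.X ^ (ringChar Fq) ^ j)}

/-- Inseparable degree of an algebraic element. -/
def insepAlg (α : L Fq) : ℕ := insepDeg Fq (minPolyPrim Fq α)

/-- `α'` is the Galois conjugate of the quadratic element `α` (equal to `α` itself in the
inseparable case): the minimal polynomial of `α` factors as `A(X - α)(X - α')`. -/
def IsConjOf (α' α : L Fq) : Prop :=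
  (minPolyPrim Fq α).natDegree = 2 ∧
  (minPolyPrim Fq α).map (φ Fq) =
    Polynomial.C (φ Fq (minPolyPrim Fq α).leadingCoeff) *
      (Polynomial.X - Polynomial.C α) * (Polynomial.X - Polynomial.C α')

/-- `v` is an absolute value on the algebraic closure of `F_q((T⁻¹))` extending `kabs`
(such an extension exists and is unique). -/
structure IsAbsExt (v : L Fq → ℝ) : Prop where
  eq_zero_iff : ∀ x, v x = 0 ↔ x = 0
  map_mul : ∀ x y, v (x * y) = v x * v y
  add_le : ∀ x y, v (x + y) ≤ max (v x) (v y)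
  nonneg : ∀ x, 0 ≤ v x
  extends_kabs : ∀ f : K Fq, v (toL Fq f) = kabs Fq f

/-- The exponent `w_n(ξ)`: the supremum of the real numbers `w` such that
`0 < |P(ξ)| ≤ H(P)^{-w}` for infinitely many `P ∈ (F_q[T])[X]` of degree at most `n`. -/
def wExp (n : ℕ) (ξ : K Fq) : EReal :=
  sSup {x : EReal | ∃ w : ℝ, x = (w : EReal) ∧
    {P : Polynomial (Polynomial Fq) | P.natDegree ≤ n ∧ 0 < kabs Fq (evalK Fq P ξ) ∧
      kabs Fq (evalK Fq P ξ) ≤ Hpoly Fq P ^ (-w)}.Infinite}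

/-- The exponent `w_n^*(ξ)`: the supremum of the real numbers `w` such that
`0 < |ξ - α| ≤ H(α)^{-w-1}` for infinitely many algebraic `α` of degree at most `n`. -/
def wStarExp (v : L Fq → ℝ) (n : ℕ) (ξ : K Fq) : EReal :=
  sSup {x : EReal | ∃ w : ℝ, x = (w : EReal) ∧
    {α : L Fq | IsAlgElem Fq α ∧ degAlg Fq α ≤ n ∧ 0 < v (toL Fq ξ - α) ∧
      v (toL Fq ξ - α) ≤ heightAlg Fq α ^ (-w - 1)}.Infinite}

/-- `pSeq a n = p_{n-1}`, the numerators of the convergents of `[a 0; a 1, a 2, …]`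
(with `p_{-1} = 1`). -/
def pSeq (a : ℕ → Polynomial Fq) : ℕ → Polynomial Fq
  | 0 => 1
  | 1 => a 0
  | (n+2) => a (n+1) * pSeq a (n+1) + pSeq a n

/-- `qSeq a n = q_{n-1}`, the denominators of the convergents of `[a 0; a 1, a 2, …]`
(with `q_{-1} = 0`). -/
def qSeq (a : ℕ → Polynomial Fq) : ℕ → Polynomial Fq
  | 0 => 0
  | 1 => 1
  | (n+2) => a (n+1) * qSeq a (n+1) + qSeq a n

/-- `ξ` has continued fraction expansion `[a 0; a 1, a 2, …]`: each partial quotient `a n`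
(`n ≥ 1`) has degree at least one and `|ξ - p_n/q_n| = |q_n|⁻¹|q_{n+1}|⁻¹` for all `n ≥ 0`. -/
def IsCFOf (ξ : K Fq) (a : ℕ → Polynomial Fq) : Prop :=
  (∀ n, 1 ≤ n → 1 ≤ (a n).natDegree) ∧
  ∀ n : ℕ,
    kabs Fq (ξ - polyToK Fq (pSeq Fq a (n+1)) / polyToK Fq (qSeq Fq a (n+1))) =
      (kabs Fq (polyToK Fq (qSeq Fq a (n+1))) * kabs Fq (polyToK Fq (qSeq Fq a (n+2))))⁻¹

/-- The sequence of partial quotients of `[0; b 0, b 1, b 2, …]`. -/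
def cfA (b : ℕ → Polynomial Fq) : ℕ → Polynomial Fq := fun n => if n = 0 then 0 else b (n - 1)

/-- `qden b n` is the denominator `q_n` of the `n`-th convergent of `[0; b 0, b 1, …]`. -/
def qden (b : ℕ → Polynomial Fq) (n : ℕ) : Polynomial Fq := qSeq Fq (cfA Fq b) (n + 1)

/-- `V^w` for a finite word `V` and a real `w ≥ 0`: `⌊w⌋` copies of `V` followed by the prefix
of `V` of length `⌈(w - ⌊w⌋)|V|⌉`. -/
def wordPow {A : Type*} (V : List A) (w : ℝ) : List A :=
  (List.replicate ⌊w⌋₊ V).flatten ++ V.take ⌈(w - ⌊w⌋₊) * V.length⌉₊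

/-- The finite word `l` is a prefix of the infinite word `b`. -/
def IsPrefixOfSeq {A : Type*} (l : List A) (b : ℕ → A) : Prop :=
  ∀ (i : ℕ) (h : i < l.length), l.get ⟨i, h⟩ = b i

/-- Condition `(*)_ρ` for an infinite word. -/
def SatisfiesCond {A : Type*} (b : ℕ → A) (ρ : ℝ) : Prop :=
  ∃ (U V : ℕ → List A) (w : ℕ → ℝ),
    (∀ n, V n ≠ []) ∧ (∀ n, 0 ≤ w n) ∧
    (∀ n, IsPrefixOfSeq (U n ++ wordPow (V n) (w n)) b) ∧
    (∀ n, ρ * (((U n).length + (V n).length : ℕ) : ℝ) ≤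
      (((U n).length + (wordPow (V n) (w n)).length : ℕ) : ℝ)) ∧
    StrictMono fun n => (wordPow (V n) (w n)).length

/-- The Diophantine exponent of an infinite word: the supremum of the `ρ` such that the word
satisfies Condition `(*)_ρ`. -/
def dioExp {A : Type*} (b : ℕ → A) : EReal :=
  sSup {x : EReal | ∃ ρ : ℝ, x = (ρ : EReal) ∧ SatisfiesCond b ρ}

/-- The complexity function: the number of distinct blocks of `n` consecutive letters. -/
def complexity {A : Type*} (b : ℕ → A) (n : ℕ) : ℕ∞ :=
  {w : Fin n → A | ∃ i : ℕ, ∀ k : Fin n, w k = b (i + k)}.encard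

/-- The infinite word `b` is ultimately periodic. -/
def UltimatelyPeriodic {A : Type*} (b : ℕ → A) : Prop :=
  ∃ N T : ℕ, 0 < T ∧ ∀ n, N ≤ n → b (n + T) = b n


-- aux
lemma card_pos : (1:ℝ) < (Fintype.card Fq : ℝ) := by
  exact_mod_cast Fintype.one_lt_card

lemma TT_pow (i : ℕ) : (TT Fq) ^ i = HahnSeries.single (-(i:ℤ)) (1 : Fq) := by
  rw [TT, HahnSeries.single_pow, one_pow, nsmul_eq_mul]
  norm_num

lemma polyToK_coeff (Q : Polynomial Fq) (m : ℤ) :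
    (polyToK Fq Q).coeff m = if 0 ≤ -m then Q.coeff (-m).toNat else 0 := by
  rw [polyToK, Polynomial.coe_eval₂RingHom, Polynomial.eval₂_eq_sum, Polynomial.sum]
  have hs : (∑ n ∈ Q.support, HahnSeries.C (Q.coeff n) * TT Fq ^ n).coeff m
      = ∑ n ∈ Q.support, (HahnSeries.C (Q.coeff n) * TT Fq ^ n).coeff m :=
    map_sum (HahnSeries.coeff.addMonoidHom m) _ _
  rw [hs]
  simp only [TT_pow, HahnSeries.C_apply, HahnSeries.single_mul_single, zero_add, mul_one,
    HahnSeries.coeff_single]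
  split_ifs with h
  · have hiff : ∀ n : ℕ, (m = -(n:ℤ)) ↔ (n = (-m).toNat) := by
      intro n; omega
    simp only [hiff]
    rw [Finset.sum_ite_eq' Q.support ((-m).toNat) Q.coeff]
    split_ifs with hmem
    · rfl
    · exact (Polynomial.notMem_support_iff.mp hmem).symm
  · refine Finset.sum_eq_zero fun n _ => if_neg ?_
    omega

lemma polyToK_ne_zero {Q : Polynomial Fq} (hQ : Q ≠ 0) : polyToK Fq Q ≠ 0 := by
  intro h
  have hco := polyToK_coeff Fq Q (-(Q.natDegree : ℤ))
  rw [h] at hco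
  simp only [HahnSeries.coeff_zero, neg_neg, Int.toNat_natCast, Nat.cast_nonneg,
    if_pos] at hco
  exact Polynomial.leadingCoeff_ne_zero.mpr hQ hco.symm

lemma polyToK_order {Q : Polynomial Fq} (hQ : Q ≠ 0) :
    (polyToK Fq Q).order = -(Q.natDegree : ℤ) := by
  apply le_antisymm
  · apply HahnSeries.order_le_of_coeff_ne_zero
    rw [polyToK_coeff]
    simpa using Polynomial.leadingCoeff_ne_zero.mpr hQ
  · by_contra hlt
    push_neg at hlt
    have hne := HahnSeries.coeff_order_eq_zero.not.2 (polyToK_ne_zero Fq hQ)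
    rw [polyToK_coeff] at hne
    split_ifs at hne with h
    · exact hne (Polynomial.coeff_eq_zero_of_natDegree_lt (by omega))
    · exact hne rfl

open Classical in
lemma kabs_polyToK (Q : Polynomial Fq) :
    kabs Fq (polyToK Fq Q) =
      if Q = 0 then 0 else (Fintype.card Fq : ℝ) ^ Q.natDegree := by
  classical
  split_ifs with h
  · subst h; simp [kabs, map_zero]
  · rw [kabs, if_neg (polyToK_ne_zero Fq h), polyToK_order Fq h, neg_neg, zpow_natCast]

lemma kabs_nonneg (f : K Fq) : 0 ≤ kabs Fq f := by
  rw [kabs]; split_ifs with h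
  · exact le_refl 0
  · positivity

lemma kabs_mul (f g : K Fq) : kabs Fq (f * g) = kabs Fq f * kabs Fq g := by
  by_cases hf : f = 0
  · simp [kabs, hf]
  by_cases hg : g = 0
  · simp [kabs, hg]
  have h1 : (0:ℝ) < (Fintype.card Fq : ℝ) := lt_trans one_pos (card_pos Fq)
  rw [kabs, kabs, kabs, if_neg hf, if_neg hg, if_neg (mul_ne_zero hf hg),
    HahnSeries.order_mul hf hg, neg_add, zpow_add₀ (ne_of_gt h1)]

lemma kabs_neg (f : K Fq) : kabs Fq (-f) = kabs Fq f := by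
  by_cases h : f = 0
  · simp [h]
  · rw [kabs, kabs, HahnSeries.order_neg, if_neg h, if_neg (neg_ne_zero.mpr h)]

lemma kabs_add_le (f g : K Fq) : kabs Fq (f + g) ≤ max (kabs Fq f) (kabs Fq g) := by
  by_cases hf : f = 0
  · simp [hf, le_max_right, kabs_nonneg]
  by_cases hg : g = 0
  · simp [hg, le_max_left, kabs_nonneg]
  by_cases hfg : f + g = 0
  · simp [kabs, hfg]
    constructor <;> positivity
  have hmin := HahnSeries.min_order_le_order_add hfg
  rw [kabs, kabs, kabs, if_neg hf, if_neg hg, if_neg hfg]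
  rcases le_total f.order g.order with h | h
  · rw [min_eq_left h] at hmin
    exact le_max_of_le_left (zpow_le_zpow_right₀ (le_of_lt (card_pos Fq)) (neg_le_neg hmin))
  · rw [min_eq_right h] at hmin
    exact le_max_of_le_right (zpow_le_zpow_right₀ (le_of_lt (card_pos Fq)) (neg_le_neg hmin))


lemma kabs_sub_le (f g : K Fq) : kabs Fq (f - g) ≤ max (kabs Fq f) (kabs Fq g) := by
  rw [sub_eq_add_neg]
  simpa [kabs_neg] using kabs_add_le Fq f (-g)

lemma hpoly_bdd (P : Polynomial (Polynomial Fq)) :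
    BddAbove (Set.range fun i => kabs Fq (polyToK Fq (P.coeff i))) := by
  classical
  refine ⟨(Fintype.card Fq : ℝ) ^
    ((Finset.range (P.natDegree + 1)).sup fun i => (P.coeff i).natDegree), ?_⟩
  rintro x ⟨i, rfl⟩
  simp only
  by_cases h : P.coeff i = 0
  · simp only [h, map_zero]
    have : kabs Fq 0 = 0 := by simp [kabs]
    rw [this]
    positivity
  · rw [kabs_polyToK, if_neg h]
    refine pow_le_pow_right₀ (le_of_lt (card_pos Fq)) ?_
    exact Finset.le_sup (f := fun i => (P.coeff i).natDegree)
      (Finset.mem_range.mpr (Nat.lt_succ_of_le (Polynomial.le_natDegree_of_ne_zero h)))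

lemma coeff_le_Hpoly (P : Polynomial (Polynomial Fq)) (i : ℕ) :
    kabs Fq (polyToK Fq (P.coeff i)) ≤ Hpoly Fq P :=
  le_ciSup (hpoly_bdd Fq P) i

lemma one_le_kabs_polyToK {Q : Polynomial Fq} (hQ : Q ≠ 0) :
    1 ≤ kabs Fq (polyToK Fq Q) := by
  rw [kabs_polyToK, if_neg hQ]
  exact one_le_pow₀ (le_of_lt (card_pos Fq))

lemma kabs_polyToK_le_one_of_natDegree_eq_zero {Q : Polynomial Fq} (hQ : Q.natDegree = 0) :
    kabs Fq (polyToK Fq Q) ≤ 1 := by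
  rw [kabs_polyToK]
  split_ifs with h
  · exact zero_le_one
  · rw [hQ, pow_zero]

set_option maxHeartbeats 1000000 in
theorem stmt9 (Fq : Type) [Field Fq] [Fintype Fq]
    (v : L Fq → ℝ) (hv : IsAbsExt Fq v)
    (α α' : L Fq) (halg : IsAlgElem Fq α) (hconj : IsConjOf Fq α' α) (hne : α ≠ α') :
    (heightAlg Fq α)⁻¹ ≤ v (α - α') ∧ v (α - α') ≤ heightAlg Fq α := by
  classical
  have hmp : IsMinPolyOf Fq (minPolyPrim Fq α) α := by
    unfold minPolyPrim
    rw [dif_pos halg]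
    exact halg.choose_spec
  set P : Polynomial (Polynomial Fq) := minPolyPrim Fq α with hP
  obtain ⟨hdeg_pos, hirr, hprim, hmonic, heval⟩ := hmp
  have hd2 : P.natDegree = 2 := hconj.1
  set a : Polynomial Fq := P.coeff 2 with ha_def
  set b : Polynomial Fq := P.coeff 1 with hb_def
  set c : Polynomial Fq := P.coeff 0 with hc_def
  have hlead : P.leadingCoeff = a := by rw [Polynomial.leadingCoeff, hd2]
  have ha0 : a ≠ 0 := by rw [← hlead]; exact hmonic.ne_zero
  set A : L Fq := φ Fq a with hA_def
  have hmap : P.map (φ Fq) = Polynomial.C A * (Polynomial.X - Polynomial.C α) *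
      (Polynomial.X - Polynomial.C α') := by
    have h := hconj.2
    rw [← hP] at h
    rw [hlead] at h
    exact h
  have hexp : Polynomial.C A * (Polynomial.X - Polynomial.C α) * (Polynomial.X - Polynomial.C α')
      = Polynomial.C A * Polynomial.X ^ 2 + Polynomial.C (-(A * α) - A * α') * Polynomial.X
        + Polynomial.C (A * (α * α')) := by
    simp only [map_mul, map_add, map_sub, map_neg]
    ring
  have hcoeff : ∀ j, φ Fq (P.coeff j) =
      (Polynomial.C A * Polynomial.X ^ 2 + Polynomial.C (-(A * α) - A * α') * Polynomial.X
        + Polynomial.C (A * (α * α'))).coeff j := by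
    intro j
    rw [← Polynomial.coeff_map, hmap, hexp]
  have hcb : φ Fq b = -(A * α) - A * α' := by
    have h := hcoeff 1
    simpa [Polynomial.coeff_C] using h
  have hcc : φ Fq c = A * (α * α') := by
    have h := hcoeff 0
    simpa [Polynomial.coeff_C] using h
  set D : Polynomial Fq := b * b - 4 * (a * c) with hD_def
  have hφD : φ Fq D = (A * (α - α')) ^ 2 := by
    have h4 : φ Fq (4 : Polynomial Fq) = 4 := map_ofNat _ 4
    rw [hD_def, map_sub, map_mul, map_mul, map_mul, h4, hcb, hcc, ← hA_def]
    ring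
  have hA0 : A ≠ 0 := by
    rw [hA_def]
    show toL Fq (polyToK Fq a) ≠ 0
    exact (map_ne_zero_iff (toL Fq) (toL Fq).injective).mpr (polyToK_ne_zero Fq ha0)
  have hDne : D ≠ 0 := by
    intro h
    have h2 : (A * (α - α')) ^ 2 = 0 := by rw [← hφD, h, map_zero]
    have h3 : A * (α - α') = 0 := by
      exact pow_eq_zero_iff (two_ne_zero) |>.mp h2
    rcases mul_eq_zero.mp h3 with h4 | h4
    · exact hA0 h4
    · exact hne (sub_eq_zero.mp h4)
  have hvφ : ∀ Q : Polynomial Fq, v (φ Fq Q) = kabs Fq (polyToK Fq Q) := fun Q =>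
    hv.extends_kabs (polyToK Fq Q)
  have key : (v A * v (α - α')) ^ 2 = kabs Fq (polyToK Fq D) := by
    rw [← hvφ D, hφD, pow_two, pow_two, hv.map_mul, hv.map_mul A]
  have hvA1 : 1 ≤ v A := by
    rw [hA_def, hvφ]
    exact one_le_kabs_polyToK Fq ha0
  have hvAH : v A ≤ Hpoly Fq P := by
    rw [hA_def, hvφ, ha_def]
    exact coeff_le_Hpoly Fq P 2
  have hs0 : 0 ≤ v (α - α') := hv.nonneg _
  have hvA0 : 0 ≤ v A := hv.nonneg _
  have hHP1 : 1 ≤ Hpoly Fq P := le_trans hvA1 hvAH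
  have hD1 : 1 ≤ kabs Fq (polyToK Fq D) := one_le_kabs_polyToK Fq hDne
  have hDH : kabs Fq (polyToK Fq D) ≤ (Hpoly Fq P) ^ 2 := by
    have h1 : kabs Fq (polyToK Fq D) ≤
        max (kabs Fq (polyToK Fq (b * b))) (kabs Fq (polyToK Fq (4 * (a * c)))) := by
      rw [hD_def, map_sub]
      exact kabs_sub_le Fq _ _
    have hbb : kabs Fq (polyToK Fq (b * b)) ≤ (Hpoly Fq P) ^ 2 := by
      rw [map_mul, kabs_mul, pow_two]
      have h1 := coeff_le_Hpoly Fq P 1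
      have h0 := kabs_nonneg Fq (polyToK Fq b)
      rw [← hb_def] at h1
      nlinarith
    have hac : kabs Fq (polyToK Fq (4 * (a * c))) ≤ (Hpoly Fq P) ^ 2 := by
      rw [map_mul, map_mul, kabs_mul, kabs_mul, pow_two]
      have h4 : kabs Fq (polyToK Fq (4 : Polynomial Fq)) ≤ 1 :=
        kabs_polyToK_le_one_of_natDegree_eq_zero Fq (Polynomial.natDegree_ofNat 4)
      have h40 := kabs_nonneg Fq (polyToK Fq (4 : Polynomial Fq))
      have ha1 := coeff_le_Hpoly Fq P 2
      have hc1 := coeff_le_Hpoly Fq P 0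
      rw [← ha_def] at ha1
      rw [← hc_def] at hc1
      have ha2 := kabs_nonneg Fq (polyToK Fq a)
      have hc2 := kabs_nonneg Fq (polyToK Fq c)
      nlinarith [mul_le_mul ha1 hc1 hc2 (le_trans ha2 ha1), mul_nonneg ha2 hc2,
        mul_le_mul_of_nonneg_right h4 (mul_nonneg ha2 hc2)]
    exact le_trans h1 (max_le hbb hac)
  have hHeq : heightAlg Fq α = Hpoly Fq P := rfl
  have hAs1 : 1 ≤ v A * v (α - α') := by
    nlinarith [key, hD1, mul_nonneg hvA0 hs0]
  have hAsH : v A * v (α - α') ≤ Hpoly Fq P := by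
    nlinarith [key, hDH, hHP1, mul_nonneg hvA0 hs0]
  constructor
  · rw [hHeq, inv_eq_one_div, div_le_iff₀ (lt_of_lt_of_le one_pos hHP1)]
    nlinarith
  · rw [hHeq]
    nlinarith

end Ooto
end
end

section
/- Let a = (a_n)_{n≥1} be an infinite sequence over a finite set A. Assume there exist integers κ ≥ 2 and n_0 ≥ 1 such that p(a, n) ≤ κn for all n ≥ n_0. Then for each n ≥ n_0 there exist finite words U_n, V_n over A (V_n nonempty) and a positive rational number w_n such that: (i) U_n V_n^{w_n} is a prefix of a; (ii) |U_n| ≤ 2κ|V_n|; (iii) n/2 ≤ |V_n| ≤ κn; (iv) if U_n is nonempty, then the last letter of U_n differs from the last letter of V_n; (v) |U_n V_n^{w_n}|/|U_n V_n| ≥ 1 + 1/(4κ+2); (vi) |U_n V_n| ≤ (κ+1)n − 1; (vii) |U_n U_n V_n| ≤ (2κ+1)n − 2. -/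
open Polynomial Filter
open scoped ENNReal

noncomputable section

namespace Ooto

variable (Fq : Type) [Field Fq] [Fintype Fq]

private lemma chain1 {A : Type} (b : ℕ → A) (i t B : ℕ)
    (hper : ∀ m, i ≤ m → m < B → b m = b (m + t)) :
    ∀ s x, i ≤ x → x + s * t < B + t → b x = b (x + s * t) := by
  intro s
  induction s with
  | zero => simp
  | succ s ih =>
    intro x hx hlt
    have h2 : x + (s + 1) * t = (x + t) + s * t := by ring
    rw [h2] at hlt ⊢
    have hxB : x < B := by have := Nat.le_add_right (x + t) (s * t); omega
    rw [← ih (x + t) (by omega) hlt]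
    exact hper x hx hxB

private lemma chain2 {A : Type} (b : ℕ → A) (i t B : ℕ)
    (hper : ∀ m, i ≤ m → m < B → b m = b (m + t)) (x y : ℕ)
    (hx : i ≤ x) (hxy : x ≤ y) (hy : y < B + t) (hdvd : t ∣ y - x) :
    b x = b y := by
  obtain ⟨s, hs⟩ := hdvd
  have hy' : y = x + s * t := by have : s * t = t * s := by ring
                                 omega
  rw [hy']
  exact chain1 b i t B hper s x hx (by omega)

private lemma exists_L (n t : ℕ) (hn : 1 ≤ n) (ht : 1 ≤ t) :
    ∃ L k : ℕ, L = t * k ∧ n ≤ 2 * L ∧ 2 * L + 1 ≤ n + 2 * t := by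
  refine ⟨t * ((n + 2 * t - 1) / (2 * t)), (n + 2 * t - 1) / (2 * t), rfl, ?_, ?_⟩ <;>
  · have hdm := Nat.div_add_mod (n + 2 * t - 1) (2 * t)
    have hmod : (n + 2 * t - 1) % (2 * t) < 2 * t := Nat.mod_lt _ (by omega)
    have hq : 2 * t * ((n + 2 * t - 1) / (2 * t)) = 2 * (t * ((n + 2 * t - 1) / (2 * t))) := by ring
    omega

private lemma rep_eq {A : Type} (b : ℕ → A) (i L B : ℕ)
    (hchain : ∀ p, p + L < B → b (i + p) = b (i + p + L)) :
    ∀ c r, c * L + r ≤ B → r ≤ L →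
      (List.replicate c ((List.range L).map (fun m => b (i + m)))).flatten ++
        ((List.range L).map (fun m => b (i + m))).take r =
      (List.range (c * L + r)).map (fun p => b (i + p)) := by
  intro c
  induction c with
  | zero =>
    intro r hrB hrL
    simp only [List.replicate_zero, List.flatten_nil, List.nil_append, Nat.zero_mul, Nat.zero_add]
    rw [← List.map_take, List.take_range, Nat.min_eq_left hrL]
  | succ c ih =>
    intro r hrB hrL
    have hle : c * L + r ≤ B := by
      have : c * L ≤ (c + 1) * L := Nat.mul_le_mul_right L (Nat.le_succ c)
      omega
    have hstep : (c + 1) * L + r = L + (c * L + r) := by ring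
    have hr : (List.range (L + (c * L + r))).map (fun p => b (i + p)) =
        (List.range L).map (fun p => b (i + p)) ++
          (List.range (c * L + r)).map (fun p => b (i + (L + p))) := by
      rw [List.range_add, List.map_append, List.map_map]
      rfl
    rw [List.replicate_succ, List.flatten_cons, List.append_assoc, ih r hle hrL, hstep, hr]
    congr 1
    apply List.map_congr_left
    intro p hp
    have hp' : p < c * L + r := List.mem_range.mp hp
    have hcl : p + L < B := by
      have : (c + 1) * L = c * L + L := by ring
      omega
    have := hchain p hcl
    rw [this]
    congr 1
    omega

private lemma wordPow_nat_div {A : Type} (V : List A) (M : ℕ) (hV : V ≠ []) :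
    wordPow V (((M : ℚ) / (V.length : ℚ) : ℚ) : ℝ) =
      (List.replicate (M / V.length) V).flatten ++ V.take (M % V.length) := by
  have hL0 : 0 < V.length := List.length_pos_iff.mpr hV
  have hLR : ((V.length : ℕ) : ℝ) ≠ 0 := by positivity
  have hcast : (((M : ℚ) / (V.length : ℚ) : ℚ) : ℝ) = (M : ℝ) / ((V.length : ℕ) : ℝ) := by
    push_cast; ring
  rw [wordPow, hcast]
  have hfloor : ⌊(M : ℝ) / ((V.length : ℕ) : ℝ)⌋₊ = M / V.length := by
    rw [Nat.floor_div_natCast, Nat.floor_natCast]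
  rw [hfloor]
  congr 2
  have hdm : ((V.length : ℕ) : ℝ) * ((M / V.length : ℕ) : ℝ) + ((M % V.length : ℕ) : ℝ)
      = (M : ℝ) := by exact_mod_cast congrArg (Nat.cast : ℕ → ℝ) (Nat.div_add_mod M V.length)
  have hkey : ((M : ℝ) / ((V.length : ℕ) : ℝ) - ((M / V.length : ℕ) : ℝ)) * ((V.length : ℕ) : ℝ)
      = ((M % V.length : ℕ) : ℝ) := by
    field_simp
    linarith
  rw [hkey, Nat.ceil_natCast]

private lemma prefix_range_map {A : Type} (b : ℕ → A) (N : ℕ) :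
    IsPrefixOfSeq ((List.range N).map b) b := by
  intro idx h
  simp


theorem stmt18 {A : Type} (b : ℕ → A) (κ n₀ : ℕ) (hκ : 2 ≤ κ) (hn₀ : 1 ≤ n₀)
    (hcomp : ∀ n : ℕ, n₀ ≤ n → complexity b n ≤ ((κ * n : ℕ) : ℕ∞)) :
    ∀ n : ℕ, n₀ ≤ n → ∃ (U V : List A) (w : ℚ), 0 < w ∧ V ≠ [] ∧
      IsPrefixOfSeq (U ++ wordPow V (w : ℝ)) b ∧
      U.length ≤ 2 * κ * V.length ∧
      n ≤ 2 * V.length ∧ V.length ≤ κ * n ∧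
      (U ≠ [] → U.getLast? ≠ V.getLast?) ∧
      (4 * κ + 3) * (U.length + V.length) ≤
        (4 * κ + 2) * (U.length + (wordPow V (w : ℝ)).length) ∧
      U.length + V.length + 1 ≤ (κ + 1) * n ∧
      2 * U.length + V.length + 2 ≤ (2 * κ + 1) * n := by
  intro n hn
  classical
  have hn1 : 1 ≤ n := le_trans hn₀ hn
  -- Pigeonhole: a repeated factor of length n in the prefix of length κn + n.
  obtain ⟨i₀, t, ht1, hj, hper⟩ : ∃ i₀ t : ℕ, 1 ≤ t ∧ i₀ + t ≤ κ * n ∧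
      ∀ m, i₀ ≤ m → m < i₀ + n → b m = b (m + t) := by
    have hS : ({w : Fin n → A | ∃ i : ℕ, ∀ k : Fin n, w k = b (i + k)}).encard
        ≤ ((κ * n : ℕ) : ℕ∞) := hcomp n hn
    set f : Fin (κ * n + 1) → (Fin n → A) := fun p k => b (p.val + k.val) with hf
    have hninj : ¬ Function.Injective f := by
      intro hinj
      have h1 : (Set.range f).encard = ((κ * n + 1 : ℕ) : ℕ∞) := by
        rw [← Set.image_univ, Set.InjOn.encard_image hinj.injOn, Set.encard_univ]
        simp
      have h2 : Set.range f ⊆ {w : Fin n → A | ∃ i : ℕ, ∀ k : Fin n, w k = b (i + k)} := by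
        rintro _ ⟨p, rfl⟩
        exact ⟨p.val, fun k => rfl⟩
      have h3 := (Set.encard_mono h2).trans hS
      rw [h1] at h3
      have h4 : κ * n + 1 ≤ κ * n := by exact_mod_cast h3
      omega
    rw [Function.not_injective_iff] at hninj
    obtain ⟨p, q, hfpq, hpq⟩ := hninj
    have key : ∀ p q : Fin (κ * n + 1), f p = f q → (p : ℕ) < (q : ℕ) →
        ∃ i₀ t : ℕ, 1 ≤ t ∧ i₀ + t ≤ κ * n ∧
          ∀ m, i₀ ≤ m → m < i₀ + n → b m = b (m + t) := by
      intro p q hfeq hlt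
      refine ⟨p.val, q.val - p.val, by omega, by have := q.isLt; omega, ?_⟩
      intro m hm hmB
      have hk : m - p.val < n := by omega
      have hthis := congrFun hfeq ⟨m - p.val, hk⟩
      simp only [hf] at hthis
      have e1 : p.val + (m - p.val) = m := by omega
      have e2 : q.val + (m - p.val) = m + (q.val - p.val) := by omega
      rw [e1, e2] at hthis
      exact hthis
    rcases lt_trichotomy (p : ℕ) (q : ℕ) with h | h | h
    · exact key p q hfpq h
    · exact absurd (Fin.val_injective h) hpq
    · exact key q p hfpq.symm h
  -- Minimal starting point of the periodic stretch.
  obtain ⟨i, hPi, hii0, hlast⟩ : ∃ i, (∀ m, i ≤ m → m < i₀ + n → b m = b (m + t)) ∧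
      i ≤ i₀ ∧ (0 < i → b (i - 1) ≠ b (i - 1 + t)) := by
    have hex : ∃ i', ∀ m, i' ≤ m → m < i₀ + n → b m = b (m + t) := ⟨i₀, hper⟩
    have hPi : ∀ m, Nat.find hex ≤ m → m < i₀ + n → b m = b (m + t) := Nat.find_spec hex
    refine ⟨Nat.find hex, hPi, Nat.find_le hper, ?_⟩
    intro hi0 heq
    have hmin := Nat.find_min hex (m := Nat.find hex - 1) (by omega)
    apply hmin
    intro m hm hmB
    rcases Nat.eq_or_lt_of_le hm with h | h
    · rw [← h]; exact heq
    · exact hPi m (by omega) hmB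
  obtain ⟨L, k, hkL, hL_lo, hL_hi⟩ := exists_L n t hn1 ht1
  have hL_pos : 0 < L := by omega
  have hk1 : 1 ≤ k := by
    rcases Nat.eq_zero_or_pos k with h | h
    · rw [h, Nat.mul_zero] at hkL; omega
    · exact h
  obtain ⟨M, hMeq⟩ : ∃ M, i + M = i₀ + n + t := ⟨i₀ + n + t - i, by omega⟩
  have hLM : L < M := by omega
  set V : List A := (List.range L).map (fun m => b (i + m)) with hVdef
  set U : List A := (List.range i).map b with hUdef
  have hVlen : V.length = L := by simp [hVdef]
  have hUlen : U.length = i := by simp [hUdef]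
  have hVne : V ≠ [] := by
    rw [← List.length_pos_iff, hVlen]; exact hL_pos
  set w : ℚ := (M : ℚ) / (L : ℚ) with hwdef
  have hchain : ∀ x y, i ≤ x → x ≤ y → y < i₀ + n + t → t ∣ y - x → b x = b y :=
    chain2 b i t (i₀ + n) hPi
  have hstep : ∀ p, p + L < M → b (i + p) = b (i + p + L) := by
    intro p hp
    refine hchain (i + p) (i + p + L) (by omega) (by omega) (by omega) ⟨k, ?_⟩
    have : i + p + L - (i + p) = L := by omega
    rw [this, hkL]
  -- The word equality
  have hword : wordPow V ((w : ℚ) : ℝ) = (List.range M).map (fun p => b (i + p)) := by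
    have hwV : (w : ℝ) = (((M : ℚ) / (V.length : ℚ) : ℚ) : ℝ) := by rw [hwdef, hVlen]
    rw [hwV, wordPow_nat_div V M hVne, hVlen]
    have hdm : M / L * L + M % L = M := Nat.div_add_mod' M L
    have hres := rep_eq b i L M hstep (M / L) (M % L) (by omega)
      (Nat.le_of_lt (Nat.mod_lt _ hL_pos))
    rw [hVdef, hres, hdm]
  have hWlen : (wordPow V ((w : ℚ) : ℝ)).length = M := by rw [hword]; simp
  have hM_pos : 0 < M := by omega
  refine ⟨U, V, w, ?_, hVne, ?_, ?_, ?_, ?_, ?_, ?_, ?_, ?_⟩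
  · -- 0 < w
    rw [hwdef]
    apply div_pos <;> exact_mod_cast (by omega : (0:ℕ) < _)
  · -- prefix
    have hfull : U ++ wordPow V ((w : ℚ) : ℝ) = (List.range (i + M)).map b := by
      rw [hword, hUdef, List.range_add, List.map_append, List.map_map]
      rfl
    rw [hfull]
    exact prefix_range_map b (i + M)
  · -- |U| ≤ 2κ|V|
    rw [hUlen, hVlen]
    calc i ≤ κ * n := by omega
      _ ≤ κ * (2 * L) := Nat.mul_le_mul_left κ hL_lo
      _ = 2 * κ * L := by ring
  · -- n ≤ 2|V|
    rw [hVlen]; exact hL_lo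
  · -- |V| ≤ κn
    rw [hVlen]
    rcases Nat.lt_or_ge k 2 with hk2 | hk2
    · have hLt : L = t := by
        have : k = 1 := by omega
        rw [hkL, this, Nat.mul_one]
      omega
    · have h2t : 2 * t ≤ L := by
        rw [hkL]
        calc 2 * t = t * 2 := by ring
          _ ≤ t * k := Nat.mul_le_mul_left t hk2
      have hn' : n ≤ κ * n := Nat.le_mul_of_pos_left n (by omega)
      omega
  · -- last letters differ
    intro hU
    have hi0 : 0 < i := by
      by_contra h
      apply hU
      rw [hUdef]
      have : i = 0 := by omega
      rw [this]; rfl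
    have hUlast : U.getLast? = some (b (i - 1)) := by
      rw [List.getLast?_eq_getElem?, hUlen, hUdef]
      rw [List.getElem?_map, List.getElem?_range (by omega)]
      rfl
    have hVlast : V.getLast? = some (b (i + (L - 1))) := by
      rw [List.getLast?_eq_getElem?, hVlen, hVdef]
      rw [List.getElem?_map, List.getElem?_range (by omega)]
      rfl
    rw [hUlast, hVlast]
    intro hcon
    have heq : b (i - 1) = b (i + (L - 1)) := by injection hcon
    apply hlast hi0
    have hchain2 : b (i - 1 + t) = b (i + (L - 1)) := by
      have htL : t ≤ L := by
        calc t = t * 1 := by ring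
          _ ≤ t * k := Nat.mul_le_mul_left t hk1
          _ = L := hkL.symm
      refine hchain (i - 1 + t) (i + (L - 1)) (by omega) (by omega) (by omega) ⟨k - 1, ?_⟩
      obtain ⟨s, rfl⟩ : ∃ s, k = s + 1 := ⟨k - 1, by omega⟩
      have h1 : L = t * s + t := by rw [hkL]; ring
      have h2 : (s + 1) - 1 = s := by omega
      rw [h2]
      omega
    rw [heq, hchain2]
  · -- repetition inequality (v)
    rw [hUlen, hVlen, hWlen]
    nlinarith [Nat.mul_le_mul_left (4 * κ + 3) hL_hi, Nat.mul_le_mul_left (8 * κ + 6) hii0,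
      hj, hMeq, Nat.zero_le (κ * n)]
  · -- (vi)
    rw [hUlen, hVlen]
    obtain ⟨C, hC⟩ : ∃ C, κ * n = C := ⟨_, rfl⟩
    have hgoal : (κ + 1) * n = C + n := by rw [← hC]; ring
    rw [hgoal]
    rw [hC] at hj
    omega
  · -- (vii)
    rw [hUlen, hVlen]
    obtain ⟨C, hC⟩ : ∃ C, κ * n = C := ⟨_, rfl⟩
    have hgoal : (2 * κ + 1) * n = 2 * C + n := by rw [← hC]; ring
    rw [hgoal]
    rw [hC] at hj
    omega


end Ooto
end
end
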